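/- Let A be an N×N doubly stochastic matrix with strictly positive diagonal entries. Then the linear operator x ↦ (A ⊗ I_n)x on ℝ^{Nn} is a paracontraction with respect to the mixed norm ‖x‖_{2,2} (i.e., the Euclidean norm on the stacked vector): for every fixed point y of A ⊗ I_n and every x with (A⊗I_n)x ≠ x, ‖(A⊗I_n)x − y‖ < ‖x − y‖. -/

import Mathlib

open Finset RealInnerProductSpace

lemma key_identity {E : Type*} [NormedAddCommGroup E] [InnerProductSpace ℝ E] {N : ℕ}
    (a : Fin N → ℝ) (z : Fin N → E) (hsum : ∑ j, a j = 1) :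
    ‖∑ j, a j • z j‖^2 = ∑ j, a j * ‖z j‖^2
      - (1/2) * ∑ j, ∑ k, a j * a k * ‖z j - z k‖^2 := by
  have h1 : ⟪∑ j, a j • z j, ∑ j, a j • z j⟫ = ∑ j, ∑ k, a j * a k * ⟪z j, z k⟫ := by
    rw [sum_inner]
    refine Finset.sum_congr rfl fun j _ => ?_
    rw [inner_sum]
    refine Finset.sum_congr rfl fun k _ => ?_
    rw [real_inner_smul_left, real_inner_smul_right]; ring
  have h2 : ∑ j, ∑ k, a j * a k * ‖z j - z k‖^2
      = 2 * ∑ j, a j * ‖z j‖^2 - 2 * ∑ j, ∑ k, a j * a k * ⟪z j, z k⟫ := by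
    have : ∀ j k : Fin N, a j * a k * ‖z j - z k‖^2
        = a j * a k * ‖z j‖^2 + a j * a k * ‖z k‖^2 - 2 * (a j * a k * ⟪z j, z k⟫) := by
      intro j k
      rw [@norm_sub_sq_real]; ring
    simp_rw [this, Finset.sum_sub_distrib, Finset.sum_add_distrib, ← Finset.mul_sum]
    have e1 : ∑ j, ∑ k, a j * a k * ‖z j‖^2 = ∑ j, a j * ‖z j‖^2 := by
      refine Finset.sum_congr rfl fun j _ => ?_
      have : ∑ k, a j * a k * ‖z j‖^2 = (a j * ‖z j‖^2) * ∑ k, a k := by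
        rw [Finset.mul_sum]; exact Finset.sum_congr rfl fun k _ => by ring
      rw [this, hsum, mul_one]
    have e2 : ∑ j, ∑ k, a j * a k * ‖z k‖^2 = ∑ k, a k * ‖z k‖^2 := by
      rw [Finset.sum_comm]
      refine Finset.sum_congr rfl fun k _ => ?_
      have : ∑ j, a j * a k * ‖z k‖^2 = (a k * ‖z k‖^2) * ∑ j, a j := by
        rw [Finset.mul_sum]; exact Finset.sum_congr rfl fun j _ => by ring
      rw [this, hsum, mul_one]
    rw [e1, e2]
    ring
  have h3 : ⟪∑ j, a j • z j, ∑ j, a j • z j⟫ = ‖∑ j, a j • z j‖^2 :=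
    real_inner_self_eq_norm_sq _
  rw [h2, ← h3, h1]; ring

/-- for a doubly stochastic N×N matrix A with strictly positive
diagonal, the operator x ↦ (A ⊗ I_n)x on ℝ^{Nn}, acting blockwise by
(Lx)_i = Σ_j a_{ij} x_j, is a paracontraction w.r.t. the mixed ‖·‖_{2,2} norm. -/
theorem kronecker_doubly_stochastic_paracontraction {N n : ℕ}
    (A : Matrix (Fin N) (Fin N) ℝ)
    (hnonneg : ∀ i j, 0 ≤ A i j)
    (hrow : ∀ i, ∑ j, A i j = 1)
    (hcol : ∀ j, ∑ i, A i j = 1)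
    (hdiag : ∀ i, 0 < A i i)
    (L : PiLp 2 (fun _ : Fin N => EuclideanSpace ℝ (Fin n)) →
         PiLp 2 (fun _ : Fin N => EuclideanSpace ℝ (Fin n)))
    (hL : ∀ x i, L x i = ∑ j, A i j • x j) :
    ∀ y, L y = y → ∀ x, L x ≠ x → ‖L x - y‖ < ‖x - y‖ := by
  intro y hy x hx
  set z : Fin N → EuclideanSpace ℝ (Fin n) := fun j => x j - y j with hz
  have hw : ∀ i, (L x - y) i = ∑ j, A i j • z j := by
    intro i
    have hyi : y i = ∑ j, A i j • y j := by conv_lhs => rw [← hy]; rw [hL]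
    show L x i - y i = _
    rw [hL, hyi, ← Finset.sum_sub_distrib]
    exact Finset.sum_congr rfl fun j _ => (smul_sub _ _ _).symm
  have hzi : ∀ i, (x - y) i = z i := fun i => rfl
  have hnsq : ∀ w : PiLp 2 (fun _ : Fin N => EuclideanSpace ℝ (Fin n)),
      ‖w‖^2 = ∑ i, ‖w i‖^2 := fun w => PiLp.norm_sq_eq_of_L2 _ w
  set D : ℝ := (1/2) * ∑ i, ∑ j, ∑ k, A i j * A i k * ‖z j - z k‖^2 with hD
  have hmain : ‖L x - y‖^2 = ‖x - y‖^2 - D := by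
    rw [hnsq, hnsq]
    have : ∀ i, ‖(L x - y) i‖^2 = ∑ j, A i j * ‖z j‖^2
        - (1/2) * ∑ j, ∑ k, A i j * A i k * ‖z j - z k‖^2 := by
      intro i; rw [hw i]; exact key_identity (A i) z (hrow i)
    simp_rw [this, Finset.sum_sub_distrib, ← Finset.mul_sum]
    congr 1
    · rw [Finset.sum_comm]
      refine Finset.sum_congr rfl fun j _ => ?_
      rw [← Finset.sum_mul, hcol, one_mul]
      rfl
  have hDnonneg : 0 ≤ ∑ i, ∑ j, ∑ k, A i j * A i k * ‖z j - z k‖^2 := by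
    refine Finset.sum_nonneg fun i _ => Finset.sum_nonneg fun j _ =>
      Finset.sum_nonneg fun k _ => ?_
    exact mul_nonneg (mul_nonneg (hnonneg i j) (hnonneg i k)) (sq_nonneg _)
  have hDne : D ≠ 0 := by
    intro h0
    have hS : ∑ i, ∑ j, ∑ k, A i j * A i k * ‖z j - z k‖^2 = 0 := by
      rw [hD] at h0; linarith
    have hterm : ∀ i j k, A i j * A i k * ‖z j - z k‖^2 = 0 := by
      intro i j k
      have h1 := (Finset.sum_eq_zero_iff_of_nonneg (fun i _ =>
        Finset.sum_nonneg fun j _ => Finset.sum_nonneg fun k _ => mul_nonneg (mul_nonneg (hnonneg _ _) (hnonneg _ _)) (sq_nonneg _))).mp hS i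
        (Finset.mem_univ i)
      have h2 := (Finset.sum_eq_zero_iff_of_nonneg (fun j _ =>
        Finset.sum_nonneg fun k _ => mul_nonneg (mul_nonneg (hnonneg _ _) (hnonneg _ _)) (sq_nonneg _))).mp h1 j (Finset.mem_univ j)
      exact (Finset.sum_eq_zero_iff_of_nonneg (fun k _ => mul_nonneg (mul_nonneg (hnonneg _ _) (hnonneg _ _)) (sq_nonneg _))).mp h2 k
        (Finset.mem_univ k)
    apply hx
    have hfix : ∀ i, L x i = x i := by
      intro i
      have hsmul : ∀ j, A i j • z j = A i j • z i := by
        intro j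
        by_cases hAij : A i j = 0
        · simp [hAij]
        · have := hterm i j i
          have hAii := (hdiag i).ne'
          have hzji : ‖z j - z i‖^2 = 0 := by
            rcases mul_eq_zero.mp this with h | h
            · exact absurd (mul_eq_zero.mp h) (by simp [hAij, hAii])
            · exact h
          have : z j = z i := by
            have := pow_eq_zero_iff (n := 2) (by norm_num) |>.mp hzji
            rwa [norm_eq_zero, sub_eq_zero] at this
          rw [this]
      have : L x i - y i = z i := by
        rw [show L x i - y i = (L x - y) i from rfl, hw i]
        simp_rw [hsmul]
        rw [← Finset.sum_smul, hrow, one_smul]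
      have hxi : L x i - y i = x i - y i := this
      exact sub_left_injective hxi
    exact PiLp.ext hfix
  have hDpos : 0 < D := lt_of_le_of_ne (by rw [hD]; positivity) (Ne.symm hDne)
  have hlt : ‖L x - y‖^2 < ‖x - y‖^2 := by rw [hmain]; linarith
  exact lt_of_pow_lt_pow_left₀ 2 (norm_nonneg _) hlt
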